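/- Let G be a group in which every nontrivial conjugacy class {c⁻¹ac : c ∈ G} (a ≠ 1) is infinite. Let A be a bounded operator on c₀(G,K) whose matrix satisfies α_{a,b} = η_{a⁻¹b} = θ_{ab⁻¹} for some functions η, θ : G → K (i.e., A commutes with both all U_g and all V_g). Then A is a scalar multiple of the identity. -/

import Mathlib

set_option linter.unusedSectionVars false

open ZeroAtInfty Filter

noncomputable section

variable {J : Type*} [TopologicalSpace J] [DiscreteTopology J]
variable {K : Type*} [NontriviallyNormedField K]

/-- The standard basis vector `δ_j` in `c₀(J, K)` (the indicator function of `j`). -/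
def delta (j : J) : C₀(J, K) :=
  letI := Classical.decEq J
  ⟨⟨fun i => if i = j then (1 : K) else 0, continuous_of_discreteTopology⟩, by
    refine Tendsto.congr' ?_ tendsto_const_nhds
    rw [cocompact_eq_cofinite]
    filter_upwards [(Set.finite_singleton j).compl_mem_cofinite] with i hi
    simp only [Set.mem_compl_iff, Set.mem_singleton_iff] at hi
    simp [hi]⟩

lemma c0_norm_apply_le (x : C₀(J, K)) (i : J) : ‖x i‖ ≤ ‖x‖ := by
  rw [← ZeroAtInftyContinuousMap.norm_toBCF_eq_norm]
  exact x.toBCF.norm_coe_le_norm i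

lemma c0_norm_le_of_forall {x : C₀(J, K)} {C : ℝ} (hC : 0 ≤ C) (h : ∀ i, ‖x i‖ ≤ C) :
    ‖x‖ ≤ C := by
  rw [← ZeroAtInftyContinuousMap.norm_toBCF_eq_norm]
  exact (BoundedContinuousFunction.norm_le hC).2 h

/-- Precomposition with a bijection of the (discrete) index set, as a continuous
linear operator on `c₀(J, K)`. -/
def precompCLM (σ : J ≃ J) : C₀(J, K) →L[K] C₀(J, K) :=
  LinearMap.mkContinuous
    (ZeroAtInftyContinuousMap.compLinearMap
      (⟨⟨σ, continuous_of_discreteTopology⟩, by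
          simpa [cocompact_eq_cofinite] using σ.injective.tendsto_cofinite⟩ : CocompactMap J J))
    1
    (fun f => by
      rw [one_mul]
      exact c0_norm_le_of_forall (norm_nonneg f) fun i => c0_norm_apply_le f (σ i))

@[simp] lemma precompCLM_apply (σ : J ≃ J) (f : C₀(J, K)) (i : J) :
    precompCLM σ f i = f (σ i) := rfl

variable {G : Type*} [Group G] [TopologicalSpace G] [DiscreteTopology G]

/-- The right regular representation: `(U_g x)_a = x_{a g}`. -/
def U (g : G) : C₀(G, K) →L[K] C₀(G, K) := precompCLM (Equiv.mulRight g)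

/-- The left regular representation: `(V_g x)_a = x_{g⁻¹ a}`. -/
def V (g : G) : C₀(G, K) →L[K] C₀(G, K) := precompCLM (Equiv.mulLeft g⁻¹)

/-- The flip operator `(W x)_a = x_{a⁻¹}`. -/
def Wop : C₀(G, K) →L[K] C₀(G, K) := precompCLM (Equiv.inv G)

end

open ZeroAtInfty Filter

/-- If every nontrivial conjugacy class of `G` is infinite (ICC group),
then a bounded operator on `c₀(G, K)` commuting with both regular representations
(equivalently, whose matrix satisfies `α_{a,b} = η_{a⁻¹b} = θ_{ab⁻¹}`) is a scalar
multiple of the identity. -/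
theorem icc_implies_factor
    {K : Type*} [NontriviallyNormedField K]
    {G : Type*} [Group G] [TopologicalSpace G] [DiscreteTopology G]
    (hicc : ∀ a : G, a ≠ 1 → {x : G | ∃ c : G, x = c⁻¹ * a * c}.Infinite)
    (A : C₀(G, K) →L[K] C₀(G, K)) (η θ : G → K)
    (hη : ∀ a b : G, A (delta b) a = η (a⁻¹ * b))
    (hθ : ∀ a b : G, A (delta b) a = θ (a * b⁻¹)) :
    ∃ c : K, A = c • ContinuousLinearMap.id K (C₀(G, K)) := by
  classical
  -- θ is a column of A, hence in c₀
  have hθ0 : Tendsto (fun t : G => θ t) cofinite (nhds 0) := by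
    have h := (A (delta (1 : G))).zero_at_infty'
    rw [cocompact_eq_cofinite] at h
    refine h.congr fun t => ?_
    show (A (delta 1)) t = θ t
    rw [hθ t 1]; simp
  -- η vanishes off 1
  have hη0 : ∀ g : G, g ≠ 1 → η g = 0 := by
    intro g hg
    by_contra hne
    have hconj : ∀ a : G, θ (a * g⁻¹ * a⁻¹) = η g := by
      intro a
      have h1 := hη a (a * g)
      have h2 := hθ a (a * g)
      rw [h1] at h2
      simpa [mul_assoc, mul_inv_rev] using h2.symm
    have hfin : {t : G | ¬ ‖θ t‖ < ‖η g‖}.Finite := by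
      have := (NormedAddCommGroup.tendsto_nhds_zero.mp hθ0) ‖η g‖ (by
        simpa [norm_pos_iff] using hne)
      simpa [Filter.eventually_cofinite] using this
    have hsub : {x : G | ∃ c : G, x = c⁻¹ * g⁻¹ * c} ⊆ {t : G | ¬ ‖θ t‖ < ‖η g‖} := by
      rintro x ⟨c, rfl⟩
      have := hconj c⁻¹
      simp only [inv_inv] at this
      simp [Set.mem_setOf_eq, this]
    exact (hicc g⁻¹ (by simpa using hg)).mono hsub hfin
  refine ⟨η 1, ?_⟩
  set c : K := η 1
  set B : C₀(G, K) →L[K] C₀(G, K) := A - c • ContinuousLinearMap.id K (C₀(G, K)) with hB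
  have hBd : ∀ b : G, B (delta b) = 0 := by
    intro b
    ext a
    simp only [hB, ContinuousLinearMap.sub_apply, ContinuousLinearMap.smul_apply,
      ContinuousLinearMap.id_apply, ZeroAtInftyContinuousMap.coe_sub,
      ZeroAtInftyContinuousMap.coe_smul, Pi.sub_apply, Pi.smul_apply,
      ZeroAtInftyContinuousMap.coe_zero, Pi.zero_apply, smul_eq_mul]
    rw [hη a b]
    by_cases hab : a = b
    · subst hab
      simp [delta, c]
    · have : a⁻¹ * b ≠ 1 := by
        intro h; exact hab (by
          have := congrArg (fun z => a * z) h
          simpa [mul_assoc] using this.symm)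
      rw [hη0 _ this]
      have : delta b a = (0 : K) := by simp [delta, hab]
      rw [this, mul_zero, sub_zero]
  have hBx : ∀ x : C₀(G, K), B x = 0 := by
    intro x
    have key : ∀ ε : ℝ, 0 < ε → ‖B x‖ ≤ ‖B‖ * ε := by
      intro ε hε
      have hfin : {i : G | ¬ ‖x i‖ < ε}.Finite := by
        have h := x.zero_at_infty'
        rw [cocompact_eq_cofinite] at h
        have := (NormedAddCommGroup.tendsto_nhds_zero.mp h) ε hε
        simpa [Filter.eventually_cofinite] using this
      set S : Finset G := hfin.toFinset
      set y : C₀(G, K) := ∑ j ∈ S, x j • delta j with hy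
      have hyval : ∀ i : G, y i = if i ∈ S then x i else 0 := by
        intro i
        have : y i = ∑ j ∈ S, x j • (delta j : C₀(G, K)) i := by
          rw [hy]
          induction S using Finset.induction with
          | empty => simp
          | insert _ _ hnotmem ih =>
            rw [Finset.sum_insert hnotmem, Finset.sum_insert hnotmem, ← ih]
            simp
        rw [this]
        simp only [delta, smul_eq_mul]
        rw [Finset.sum_congr rfl (fun j _ => by
          show x j * (if i = j then (1:K) else 0) = if i = j then x j else 0
          split <;> simp_all)]
        exact Finset.sum_ite_eq S i x
      have hdist : ‖x - y‖ ≤ ε := by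
        refine c0_norm_le_of_forall hε.le fun i => ?_
        have : (x - y) i = x i - y i := rfl
        rw [this, hyval i]
        by_cases hi : i ∈ S
        · simp [hi]; exact hε.le
        · simp only [hi, if_neg, if_false, sub_zero]
          have : ‖x i‖ < ε := by
            by_contra hc
            exact hi (hfin.mem_toFinset.mpr hc)
          exact this.le
      have hBy : B y = 0 := by
        rw [hy, map_sum]
        refine Finset.sum_eq_zero fun j _ => ?_
        rw [map_smul, hBd j, smul_zero]
      calc ‖B x‖ = ‖B (x - y)‖ := by rw [map_sub, hBy, sub_zero]
        _ ≤ ‖B‖ * ‖x - y‖ := B.le_opNorm _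
        _ ≤ ‖B‖ * ε := mul_le_mul_of_nonneg_left hdist B.opNorm_nonneg
    have : ‖B x‖ ≤ 0 := by
      by_contra h
      push_neg at h
      have hε : 0 < ‖B x‖ / (‖B‖ + 1) := div_pos h (by positivity)
      have := key _ hε
      have hlt : ‖B‖ * (‖B x‖ / (‖B‖ + 1)) < ‖B x‖ := by
        calc ‖B‖ * (‖B x‖ / (‖B‖ + 1)) < (‖B‖ + 1) * (‖B x‖ / (‖B‖ + 1)) := by
              exact mul_lt_mul_of_pos_right (by linarith) hε
          _ = ‖B x‖ := by field_simp
      linarith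
    simpa using le_antisymm this (norm_nonneg _)
  have h0 : B = 0 := ContinuousLinearMap.ext fun x => hBx x
  have h2 : A - c • ContinuousLinearMap.id K (C₀(G, K)) = 0 := h0
  exact sub_eq_zero.mp h2
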